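/- If n is an odd positive integer, r an integer with n − 2r ≡ 0 (mod p) for an odd prime p, then Σ_{k ≡ r (mod p), 0≤k≤n} (−1)^k C(n,k) = 0 and Σ_{k ≡ pr (mod p²), 0≤k≤pn} (−1)^k C(pn,k) = 0. -/

import Mathlib

lemma aux15 (m : ℕ) (M s : ℤ) (hm : Odd m) (hd : M ∣ ((m : ℤ) - 2 * s)) :
    (∑ k ∈ Finset.range (m + 1),
        if (k : ℤ) ≡ s [ZMOD M] then (-1 : ℤ) ^ k * (m.choose k : ℤ) else 0) = 0 := by
  apply Finset.sum_involution (fun k _ => m - k)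
  · intro k hk
    simp only [Finset.mem_range] at hk
    have hkm : k ≤ m := Nat.lt_succ_iff.mp hk
    have hcond : ((k : ℤ) ≡ s [ZMOD M]) ↔ (((m - k : ℕ) : ℤ) ≡ s [ZMOD M]) := by
      rw [Int.modEq_iff_dvd, Int.modEq_iff_dvd]
      push_cast [hkm]
      constructor
      · intro h
        rw [show s - ((m : ℤ) - k) = -(((m : ℤ) - 2 * s) + (s - k)) by ring]
        exact dvd_neg.mpr (dvd_add hd h)
      · intro h
        rw [show s - (k : ℤ) = -(((m : ℤ) - 2 * s) + (s - ((m : ℤ) - k))) by ring]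
        exact dvd_neg.mpr (dvd_add hd h)
    by_cases hc : ((k : ℤ) ≡ s [ZMOD M])
    · rw [if_pos hc, if_pos (hcond.mp hc), Nat.choose_symm hkm]
      have hsgn : (-1 : ℤ) ^ (m - k) = -(-1 : ℤ) ^ k := by
        have h1 : (-1 : ℤ) ^ (m - k) * (-1 : ℤ) ^ k = (-1 : ℤ) ^ m := by
          rw [← pow_add, Nat.sub_add_cancel hkm]
        have h2 : (-1 : ℤ) ^ m = -1 := hm.neg_one_pow
        have h3 : (-1 : ℤ) ^ k * (-1 : ℤ) ^ k = 1 := by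
          rw [← pow_add, Even.neg_one_pow ⟨k, rfl⟩]
        calc (-1 : ℤ) ^ (m - k) = (-1 : ℤ) ^ (m - k) * ((-1 : ℤ) ^ k * (-1 : ℤ) ^ k) := by
              rw [h3]; ring
          _ = (-1 : ℤ) ^ m * (-1 : ℤ) ^ k := by rw [← h1]; ring
          _ = -(-1 : ℤ) ^ k := by rw [h2]; ring
      rw [hsgn]; ring
    · rw [if_neg hc, if_neg (fun h => hc (hcond.mpr h))]; ring
  · intro k hk _
    simp only [Finset.mem_range] at hk
    have hkm : k ≤ m := Nat.lt_succ_iff.mp hk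
    intro h
    rcases hm with ⟨t, ht⟩
    omega
  · intro k hk
    simp only [Finset.mem_range] at hk ⊢
    omega
  · intro k hk
    simp only [Finset.mem_range] at hk
    omega

theorem stmt15 (p n : ℕ) (r : ℤ) (hp : p.Prime) (hpodd : Odd p) (hn : 1 ≤ n) (hnodd : Odd n)
    (hr : (n : ℤ) - 2 * r ≡ 0 [ZMOD p]) :
    (∑ k ∈ Finset.range (n + 1),
        if (k : ℤ) ≡ r [ZMOD p] then (-1 : ℤ) ^ k * (n.choose k : ℤ) else 0) = 0 ∧
    (∑ k ∈ Finset.range (p * n + 1),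
        if (k : ℤ) ≡ (p : ℤ) * r [ZMOD (p ^ 2 : ℕ)] then (-1 : ℤ) ^ k * ((p * n).choose k : ℤ)
        else 0) = 0 := by
  have hd : (p : ℤ) ∣ ((n : ℤ) - 2 * r) := Int.modEq_zero_iff_dvd.mp hr
  constructor
  · exact aux15 n p r hnodd hd
  · have hd2 : ((p : ℤ) ^ 2) ∣ (((p * n : ℕ) : ℤ) - 2 * ((p : ℤ) * r)) := by
      obtain ⟨c, hc⟩ := hd
      refine ⟨c, ?_⟩
      push_cast
      rw [sq]
      nlinarith [hc]
    have h := aux15 (p * n) ((p : ℤ) ^ 2) ((p : ℤ) * r) (hpodd.mul hnodd) hd2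
    simpa [Nat.cast_pow] using h
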